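/- arXiv:2604.25811 — 3 statements merged into one kernel-verified Lean document; each statement's English description precedes it below -/
import Mathlib

section
/- Let x be an infinite binary word, and let w and w' be distinct factors of x of the same length such that w and w' are tortoise-equivalent. Suppose w and w' each contain at least one 1, and write w = u v and w' = u' v, where u and u' each contain exactly one occurrence of 1. Then z v is a left special factor of x, where z is the longest common suffix of u and u'. -/
/-- The tortoise operation on binary words: if the word contains a 1 (`true`),
delete the first occurrence of 1 and append a 1 at the right end; otherwise do nothing. -/
def tortoise (w : List Bool) : List Bool :=
  if true ∈ w then (w.erase true) ++ [true] else w

/-- `w` is a factor (subword) of the infinite word `x`. -/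
def IsFactor (x : ℕ → Bool) (w : List Bool) : Prop :=
  ∃ i, w = (List.range w.length).map (fun t => x (i + t))

/-- The set of length-`n` factors of `x`. -/
def factorSet (x : ℕ → Bool) (n : ℕ) : Set (List Bool) :=
  {w | w.length = n ∧ IsFactor x w}

/-- The factor complexity of `x`. -/
noncomputable def rho (x : ℕ → Bool) (n : ℕ) : ℕ :=
  (factorSet x n).ncard

/-- The tortoise complexity of `x`: the number of `∼ₜ`-equivalence classes of
length-`n` factors of `x`, i.e. the number of distinct images under `tortoise`. -/
noncomputable def rhoTort (x : ℕ → Bool) (n : ℕ) : ℕ :=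
  (tortoise '' factorSet x n).ncard

/-- The `k`-tortoise complexity of `x`: the number of equivalence classes of
length-`n` factors of `x` under `tortoise^[k] w = tortoise^[k] v`. -/
noncomputable def rhoTortK (k : ℕ) (x : ℕ → Bool) (n : ℕ) : ℕ :=
  ((tortoise^[k]) '' factorSet x n).ncard

/-- `y` is a left special factor of `x`: both `0y` and `1y` are factors of `x`. -/
def LeftSpecial (x : ℕ → Bool) (y : List Bool) : Prop :=
  IsFactor x (false :: y) ∧ IsFactor x (true :: y)

/-- The Thue–Morse sequence: `tm n` is the parity of the number of 1's in the
binary expansion of `n` (`true` = 1). -/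
def tm (n : ℕ) : Bool :=
  decide ((Nat.digits 2 n).sum % 2 = 1)

/-- The regular paperfolding sequence, reindexed so that `pf m = f_{m+1}`:
writing `m + 1 = n' * 2^k` with `n'` odd, `pf m = true` iff `n' ≡ 3 (mod 4)`. -/
def pf (m : ℕ) : Bool :=
  decide ((m + 1) / 2 ^ (padicValNat 2 (m + 1)) % 4 = 3)


lemma factor_suffix (x : ℕ → Bool) {w s : List Bool} (h : IsFactor x w) (hs : s <:+ w) :
    IsFactor x s := by
  obtain ⟨i, hi⟩ := h
  obtain ⟨p, rfl⟩ := hs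
  refine ⟨i + p.length, ?_⟩
  have h2 := congrArg (List.drop p.length) hi
  simpa [List.length_append, List.range_add, List.drop_append, List.drop_left,
    Function.comp_def, add_assoc] using h2

/-- if `w ≠ w'` are equal-length tortoise-equivalent factors of an
infinite binary word `x`, each containing a 1, written `w = u v`, `w' = u' v` with
`u`, `u'` each containing exactly one 1, then `z v` is a left special factor of `x`,
where `z` is the longest common suffix of `u` and `u'`. -/
theorem stmt_0 (x : ℕ → Bool) (w w' u u' v z : List Bool)
    (hw : IsFactor x w) (hw' : IsFactor x w')
    (hne : w ≠ w') (hlen : w.length = w'.length)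
    (hteq : tortoise w = tortoise w')
    (h1 : true ∈ w) (h1' : true ∈ w')
    (hsplit : w = u ++ v) (hsplit' : w' = u' ++ v)
    (hu : u.count true = 1) (hu' : u'.count true = 1)
    (hz : z <:+ u) (hz' : z <:+ u')
    (hzmax : ∀ z' : List Bool, z' <:+ u → z' <:+ u' → z'.length ≤ z.length) :
    LeftSpecial x (z ++ v) := by
  have hlu : u.length = u'.length := by
    rw [hsplit, hsplit'] at hlen
    simp only [List.length_append] at hlen
    omega
  have hune : u ≠ u' := fun h => hne (by rw [hsplit, hsplit', h])
  have hzlt : z.length < u.length := by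
    rcases lt_or_eq_of_le hz.length_le with h | h
    · exact h
    · exfalso
      have hzu : z = u := hz.eq_of_length h
      subst hzu
      exact hune (hz'.eq_of_length hlu)
  have hzlt' : z.length < u'.length := hlu ▸ hzlt
  have hstep : ∀ (l : List Bool), z <:+ l → z.length < l.length →
      ∃ b, (b :: z) <:+ l := by
    intro l hzl hlt
    obtain ⟨p, hp⟩ := hzl
    have hpne : p ≠ [] := by
      intro h; subst h; simp at hp; subst hp; omega
    obtain ⟨q, b, rfl⟩ := p.eq_nil_or_concat.resolve_left hpne
    exact ⟨b, q, by simpa using hp⟩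
  obtain ⟨b, hb⟩ := hstep u hz hzlt
  obtain ⟨b', hb'⟩ := hstep u' hz' hzlt'
  have hbne : b ≠ b' := by
    intro h
    have := hzmax (b :: z) hb (h ▸ hb')
    simp at this
  have hf : IsFactor x (b :: (z ++ v)) := by
    refine factor_suffix x hw ?_
    obtain ⟨q, hq⟩ := hb
    exact ⟨q, by rw [hsplit, ← hq]; simp⟩
  have hf' : IsFactor x (b' :: (z ++ v)) := by
    refine factor_suffix x hw' ?_
    obtain ⟨q, hq⟩ := hb'
    exact ⟨q, by rw [hsplit', ← hq]; simp⟩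
  cases b <;> cases b' <;> simp_all [LeftSpecial]
end

section
/- Let w and v be factors of the regular paperfolding word f with |w| = |v| ≥ 8 (each such factor necessarily contains both a 0 and a 1). If the word obtained from w by deleting the first occurrence of 1 in w and appending a 1 at the end equals the word obtained from v by deleting the first occurrence of 1 in v and appending a 1 at the end — i.e., if tortoise(w) = tortoise(v) — then v = w. -/
/-! ### Structural lemmas for `pf` -/

lemma pf_even (t : ℕ) : pf (2*t) = decide (t % 2 = 1) := by
  unfold pf
  have h0 : padicValNat 2 (2*t+1) = 0 :=
    padicValNat.eq_zero_of_not_dvd (by omega)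
  rw [h0]
  simp only [pow_zero, Nat.div_one]
  congr 1
  simp only [eq_iff_iff]
  omega

lemma pf_odd (m : ℕ) : pf (2*m+1) = pf m := by
  unfold pf
  have h2 : (2*m+1)+1 = 2*(m+1) := by ring
  rw [h2]
  have hv : padicValNat 2 (2*(m+1)) = 1 + padicValNat 2 (m+1) := by
    rw [padicValNat.mul (by omega) (by omega), padicValNat.self (by norm_num)]
  rw [hv, pow_add, pow_one]
  rw [Nat.mul_div_mul_left _ _ (by norm_num : 0 < 2)]

lemma pf_mod4 (b b' : ℕ) (h : b % 4 = b' % 4) (h2 : b % 2 = 0) : pf b = pf b' := by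
  obtain ⟨g, rfl⟩ : ∃ g, b = 2*g := ⟨b/2, by omega⟩
  obtain ⟨g', rfl⟩ : ∃ g', b' = 2*g' := ⟨b'/2, by omega⟩
  rw [pf_even, pf_even, show g % 2 = g' % 2 from by omega]

lemma pf_mod8 (a a' : ℕ) (h : a % 8 = a' % 8) (h3 : a % 4 ≠ 3) : pf a = pf a' := by
  rcases (by omega : a % 2 = 0 ∨ a % 2 = 1) with he | ho
  · obtain ⟨g, rfl⟩ : ∃ g, a = 2*g := ⟨a/2, by omega⟩
    obtain ⟨g', rfl⟩ : ∃ g', a' = 2*g' := ⟨a'/2, by omega⟩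
    rw [pf_even, pf_even, show g % 2 = g' % 2 from by omega]
  · obtain ⟨g, rfl⟩ : ∃ g, a = 2*g+1 := ⟨a/2, by omega⟩
    obtain ⟨g', rfl⟩ : ∃ g', a' = 2*g'+1 := ⟨a'/2, by omega⟩
    rw [pf_odd, pf_odd]
    exact pf_mod4 _ _ (by omega) (by omega)

lemma pf_mod16 (m m' : ℕ) (h : m % 16 = m' % 16) (h7 : m % 8 ≠ 7) : pf m = pf m' := by
  rcases (by omega : m % 2 = 0 ∨ m % 2 = 1) with he | ho
  · obtain ⟨g, rfl⟩ : ∃ g, m = 2*g := ⟨m/2, by omega⟩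
    obtain ⟨g', rfl⟩ : ∃ g', m' = 2*g' := ⟨m'/2, by omega⟩
    rw [pf_even, pf_even, show g % 2 = g' % 2 from by omega]
  · obtain ⟨g, rfl⟩ : ∃ g, m = 2*g+1 := ⟨m/2, by omega⟩
    obtain ⟨g', rfl⟩ : ∃ g', m' = 2*g'+1 := ⟨m'/2, by omega⟩
    rw [pf_odd, pf_odd]
    exact pf_mod8 _ _ (by omega) (by omega)

lemma pf_deep (b : ℕ) : pf (8*b+7) = pf b := by
  rw [show 8*b+7 = 2*(2*(2*b+1)+1)+1 from by ring, pf_odd, pf_odd, pf_odd]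

lemma pf_one : pf 1 = false := by
  rw [show (1:ℕ) = 2*0+1 from rfl, pf_odd, show (0:ℕ) = 2*0 from rfl, pf_even]; rfl
lemma pf_five : pf 5 = true := by
  rw [show (5:ℕ) = 2*2+1 from rfl, pf_odd, show (2:ℕ) = 2*1 from rfl, pf_even]; rfl

/-- Every length-8 window of `pf` matches a window starting at some `i' < 48`. -/
lemma pf_window (i : ℕ) : ∃ i' < 48, ∀ t < 8, pf (i+t) = pf (i'+t) := by
  set t0 := 7 - (i % 8) with ht0def
  have ht0 : t0 < 8 ∧ (i + t0) % 8 = 7 := by omega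
  have huniq : ∀ t < 8, (i+t) % 8 = 7 → t = t0 := by omega
  rcases (by omega : (i + t0) % 16 = 7 ∨ (i + t0) % 16 = 15) with hA | hB
  · refine ⟨i % 32, by omega, fun t ht => ?_⟩
    by_cases hdeep : (i+t) % 8 = 7
    · have htt0 : t = t0 := huniq t ht hdeep
      subst htt0
      obtain ⟨b, hb⟩ : ∃ b, i + t0 = 8*b+7 := ⟨(i+t0-7)/8, by omega⟩
      obtain ⟨b', hb'⟩ : ∃ b', i % 32 + t0 = 8*b'+7 := ⟨(i%32+t0-7)/8, by omega⟩
      rw [hb, hb', pf_deep, pf_deep]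
      exact pf_mod4 _ _ (by omega) (by omega)
    · exact pf_mod16 _ _ (by omega) (by omega)
  · obtain ⟨b, hb⟩ : ∃ b, i + t0 = 8*b+7 := ⟨(i+t0-7)/8, by omega⟩
    refine ⟨if pf b then 47 - t0 else 15 - t0, by split <;> omega, fun t ht => ?_⟩
    by_cases hdeep : (i+t) % 8 = 7
    · have htt0 : t = t0 := huniq t ht hdeep
      subst htt0
      rw [hb, pf_deep]
      cases hpb : pf b with
      | false =>
        rw [if_neg (by simp [hpb]), show 15 - t0 + t0 = 8*1+7 from by omega,
          pf_deep, pf_one]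
      | true =>
        rw [if_pos (by simp [hpb]), show 47 - t0 + t0 = 8*5+7 from by omega,
          pf_deep, pf_five]
    · split <;> exact pf_mod16 _ _ (by omega) (by omega)

/-! ### Table of the first 56 values of `pf`, and finite checks -/

def tab (m : ℕ) : Bool := [false, false, true, false, false, true, true, false, false, false, true, true, false, true, true, false, false, false, true, false, false, true, true, true, false, false, true, true, false, true, true, false, false, false, true, false, false, true, true, false, false, false, true, true, false, true, true, true, false, false, true, false, false, true, true, true].getD m false

lemma pf_tab : ∀ m, m < 56 → pf m = tab m := by
  intro m hm
  interval_cases m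
  · rw [show (0:ℕ) = 2*0 from rfl, pf_even]; rfl
  · rw [show (1:ℕ) = 2*0+1 from rfl, pf_odd, show (0:ℕ) = 2*0 from rfl, pf_even]; rfl
  · rw [show (2:ℕ) = 2*1 from rfl, pf_even]; rfl
  · rw [show (3:ℕ) = 2*1+1 from rfl, pf_odd, show (1:ℕ) = 2*0+1 from rfl, pf_odd, show (0:ℕ) = 2*0 from rfl, pf_even]; rfl
  · rw [show (4:ℕ) = 2*2 from rfl, pf_even]; rfl
  · rw [show (5:ℕ) = 2*2+1 from rfl, pf_odd, show (2:ℕ) = 2*1 from rfl, pf_even]; rfl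
  · rw [show (6:ℕ) = 2*3 from rfl, pf_even]; rfl
  · rw [show (7:ℕ) = 2*3+1 from rfl, pf_odd, show (3:ℕ) = 2*1+1 from rfl, pf_odd, show (1:ℕ) = 2*0+1 from rfl, pf_odd, show (0:ℕ) = 2*0 from rfl, pf_even]; rfl
  · rw [show (8:ℕ) = 2*4 from rfl, pf_even]; rfl
  · rw [show (9:ℕ) = 2*4+1 from rfl, pf_odd, show (4:ℕ) = 2*2 from rfl, pf_even]; rfl
  · rw [show (10:ℕ) = 2*5 from rfl, pf_even]; rfl
  · rw [show (11:ℕ) = 2*5+1 from rfl, pf_odd, show (5:ℕ) = 2*2+1 from rfl, pf_odd, show (2:ℕ) = 2*1 from rfl, pf_even]; rfl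
  · rw [show (12:ℕ) = 2*6 from rfl, pf_even]; rfl
  · rw [show (13:ℕ) = 2*6+1 from rfl, pf_odd, show (6:ℕ) = 2*3 from rfl, pf_even]; rfl
  · rw [show (14:ℕ) = 2*7 from rfl, pf_even]; rfl
  · rw [show (15:ℕ) = 2*7+1 from rfl, pf_odd, show (7:ℕ) = 2*3+1 from rfl, pf_odd, show (3:ℕ) = 2*1+1 from rfl, pf_odd, show (1:ℕ) = 2*0+1 from rfl, pf_odd, show (0:ℕ) = 2*0 from rfl, pf_even]; rfl
  · rw [show (16:ℕ) = 2*8 from rfl, pf_even]; rfl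
  · rw [show (17:ℕ) = 2*8+1 from rfl, pf_odd, show (8:ℕ) = 2*4 from rfl, pf_even]; rfl
  · rw [show (18:ℕ) = 2*9 from rfl, pf_even]; rfl
  · rw [show (19:ℕ) = 2*9+1 from rfl, pf_odd, show (9:ℕ) = 2*4+1 from rfl, pf_odd, show (4:ℕ) = 2*2 from rfl, pf_even]; rfl
  · rw [show (20:ℕ) = 2*10 from rfl, pf_even]; rfl
  · rw [show (21:ℕ) = 2*10+1 from rfl, pf_odd, show (10:ℕ) = 2*5 from rfl, pf_even]; rfl
  · rw [show (22:ℕ) = 2*11 from rfl, pf_even]; rfl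
  · rw [show (23:ℕ) = 2*11+1 from rfl, pf_odd, show (11:ℕ) = 2*5+1 from rfl, pf_odd, show (5:ℕ) = 2*2+1 from rfl, pf_odd, show (2:ℕ) = 2*1 from rfl, pf_even]; rfl
  · rw [show (24:ℕ) = 2*12 from rfl, pf_even]; rfl
  · rw [show (25:ℕ) = 2*12+1 from rfl, pf_odd, show (12:ℕ) = 2*6 from rfl, pf_even]; rfl
  · rw [show (26:ℕ) = 2*13 from rfl, pf_even]; rfl
  · rw [show (27:ℕ) = 2*13+1 from rfl, pf_odd, show (13:ℕ) = 2*6+1 from rfl, pf_odd, show (6:ℕ) = 2*3 from rfl, pf_even]; rfl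
  · rw [show (28:ℕ) = 2*14 from rfl, pf_even]; rfl
  · rw [show (29:ℕ) = 2*14+1 from rfl, pf_odd, show (14:ℕ) = 2*7 from rfl, pf_even]; rfl
  · rw [show (30:ℕ) = 2*15 from rfl, pf_even]; rfl
  · rw [show (31:ℕ) = 2*15+1 from rfl, pf_odd, show (15:ℕ) = 2*7+1 from rfl, pf_odd, show (7:ℕ) = 2*3+1 from rfl, pf_odd, show (3:ℕ) = 2*1+1 from rfl, pf_odd, show (1:ℕ) = 2*0+1 from rfl, pf_odd, show (0:ℕ) = 2*0 from rfl, pf_even]; rfl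
  · rw [show (32:ℕ) = 2*16 from rfl, pf_even]; rfl
  · rw [show (33:ℕ) = 2*16+1 from rfl, pf_odd, show (16:ℕ) = 2*8 from rfl, pf_even]; rfl
  · rw [show (34:ℕ) = 2*17 from rfl, pf_even]; rfl
  · rw [show (35:ℕ) = 2*17+1 from rfl, pf_odd, show (17:ℕ) = 2*8+1 from rfl, pf_odd, show (8:ℕ) = 2*4 from rfl, pf_even]; rfl
  · rw [show (36:ℕ) = 2*18 from rfl, pf_even]; rfl
  · rw [show (37:ℕ) = 2*18+1 from rfl, pf_odd, show (18:ℕ) = 2*9 from rfl, pf_even]; rfl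
  · rw [show (38:ℕ) = 2*19 from rfl, pf_even]; rfl
  · rw [show (39:ℕ) = 2*19+1 from rfl, pf_odd, show (19:ℕ) = 2*9+1 from rfl, pf_odd, show (9:ℕ) = 2*4+1 from rfl, pf_odd, show (4:ℕ) = 2*2 from rfl, pf_even]; rfl
  · rw [show (40:ℕ) = 2*20 from rfl, pf_even]; rfl
  · rw [show (41:ℕ) = 2*20+1 from rfl, pf_odd, show (20:ℕ) = 2*10 from rfl, pf_even]; rfl
  · rw [show (42:ℕ) = 2*21 from rfl, pf_even]; rfl
  · rw [show (43:ℕ) = 2*21+1 from rfl, pf_odd, show (21:ℕ) = 2*10+1 from rfl, pf_odd, show (10:ℕ) = 2*5 from rfl, pf_even]; rfl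
  · rw [show (44:ℕ) = 2*22 from rfl, pf_even]; rfl
  · rw [show (45:ℕ) = 2*22+1 from rfl, pf_odd, show (22:ℕ) = 2*11 from rfl, pf_even]; rfl
  · rw [show (46:ℕ) = 2*23 from rfl, pf_even]; rfl
  · rw [show (47:ℕ) = 2*23+1 from rfl, pf_odd, show (23:ℕ) = 2*11+1 from rfl, pf_odd, show (11:ℕ) = 2*5+1 from rfl, pf_odd, show (5:ℕ) = 2*2+1 from rfl, pf_odd, show (2:ℕ) = 2*1 from rfl, pf_even]; rfl
  · rw [show (48:ℕ) = 2*24 from rfl, pf_even]; rfl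
  · rw [show (49:ℕ) = 2*24+1 from rfl, pf_odd, show (24:ℕ) = 2*12 from rfl, pf_even]; rfl
  · rw [show (50:ℕ) = 2*25 from rfl, pf_even]; rfl
  · rw [show (51:ℕ) = 2*25+1 from rfl, pf_odd, show (25:ℕ) = 2*12+1 from rfl, pf_odd, show (12:ℕ) = 2*6 from rfl, pf_even]; rfl
  · rw [show (52:ℕ) = 2*26 from rfl, pf_even]; rfl
  · rw [show (53:ℕ) = 2*26+1 from rfl, pf_odd, show (26:ℕ) = 2*13 from rfl, pf_even]; rfl
  · rw [show (54:ℕ) = 2*27 from rfl, pf_even]; rfl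
  · rw [show (55:ℕ) = 2*27+1 from rfl, pf_odd, show (27:ℕ) = 2*13+1 from rfl, pf_odd, show (13:ℕ) = 2*6+1 from rfl, pf_odd, show (6:ℕ) = 2*3 from rfl, pf_even]; rfl

def innerW (i j d : ℕ) : Bool :=
  decide (1 ≤ d) && decide (j+d+1 ≤ 8)
    && ((List.range j).all fun t => tab (i+t) == false)
    && (tab (i+j) == true)
    && ((List.range d).all fun t => tab (i+j+1+t) == false)
    && ((List.range 48).any fun i' =>
        ((List.range (j+d)).all fun t => tab (i'+t) == false)
        && (tab (i'+(j+d)) == true)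
        && ((List.range (7-(j+d))).all fun t => tab (i+j+d+1+t) == tab (i'+j+d+1+t)))

def chk1 : Bool := (List.range 48).all fun i => (List.range 8).all fun j => (List.range 8).all fun d =>
  !(innerW i j d)

lemma chk1_eq : chk1 = true := by decide

def chk0 : Bool := (List.range 48).all fun i => (List.range 8).any fun t => tab (i+t)
lemma chk0_eq : chk0 = true := by decide

lemma fin0 (i : ℕ) (hi : i < 48) : ∃ t < 8, tab (i+t) = true := by
  have h := chk0_eq
  unfold chk0 at h
  simp only [List.all_eq_true, List.any_eq_true, List.mem_range] at h
  obtain ⟨t, ht, h⟩ := h i hi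
  exact ⟨t, ht, h⟩

lemma fin1 (i j d i' : ℕ) (hi : i < 48) (hj : j < 8) (hd8 : d < 8) (hi' : i' < 48)
    (hd1 : 1 ≤ d) (hjd : j+d+1 ≤ 8)
    (h1 : ∀ t < j, tab (i+t) = false) (h2 : tab (i+j) = true)
    (h3 : ∀ t < d, tab (i+j+1+t) = false)
    (h4 : ∀ t < j+d, tab (i'+t) = false) (h5 : tab (i'+(j+d)) = true)
    (h6 : ∀ t < 7-(j+d), tab (i+j+d+1+t) = tab (i'+j+d+1+t)) : False := by
  have h := chk1_eq
  unfold chk1 at h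
  simp only [List.all_eq_true, List.mem_range, Bool.not_eq_true'] at h
  have hfalse := h i hi j hj d hd8
  have htrue : innerW i j d = true := by
    unfold innerW
    simp only [Bool.and_eq_true, List.all_eq_true, List.any_eq_true, List.mem_range,
      beq_iff_eq, decide_eq_true_eq]
    exact ⟨⟨⟨⟨⟨hd1, hjd⟩, fun t ht => h1 t ht⟩, h2⟩, fun t ht => h3 t ht⟩,
      ⟨i', hi', ⟨⟨fun t ht => h4 t ht, h5⟩, fun t ht => h6 t ht⟩⟩⟩
  rw [hfalse] at htrue
  exact absurd htrue (by simp)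

/-! ### The impossible configuration -/

lemma noConfig (iw iv j d : ℕ) (hd : 1 ≤ d)
    (h1 : ∀ t < j, pf (iw+t) = false) (h2 : pf (iw+j) = true)
    (h3 : ∀ t < d, pf (iw+(j+1+t)) = false)
    (h4 : ∀ t < j+d, pf (iv+t) = false) (h5 : pf (iv+(j+d)) = true)
    (h6 : ∀ t < 7-(j+d), pf (iw+(j+d+1+t)) = pf (iv+(j+d+1+t))) : False := by
  obtain ⟨i, hi, hwin⟩ := pf_window iw
  obtain ⟨i', hi', hwin'⟩ := pf_window iv
  by_cases hb : j + d + 1 ≤ 8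
  · apply fin1 i j d i' hi (by omega) (by omega) hi' hd hb
    · intro t ht
      have := h1 t ht
      rw [hwin t (by omega), pf_tab _ (by omega)] at this
      exact this
    · have := h2
      rw [hwin j (by omega), pf_tab _ (by omega)] at this
      exact this
    · intro t ht
      have := h3 t ht
      rw [hwin (j+1+t) (by omega), pf_tab _ (by omega)] at this
      rw [show i+j+1+t = i+(j+1+t) from by omega]
      exact this
    · intro t ht
      have := h4 t ht
      rw [hwin' t (by omega), pf_tab _ (by omega)] at this
      exact this
    · have := h5
      rw [hwin' (j+d) (by omega), pf_tab _ (by omega)] at this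
      exact this
    · intro t ht
      have := h6 t ht
      rw [hwin (j+d+1+t) (by omega), hwin' (j+d+1+t) (by omega),
        pf_tab (i+(j+d+1+t)) (by omega), pf_tab (i'+(j+d+1+t)) (by omega)] at this
      rw [show i+j+d+1+t = i+(j+d+1+t) from by omega,
        show i'+j+d+1+t = i'+(j+d+1+t) from by omega]
      exact this
  · obtain ⟨t, ht, htt⟩ := fin0 i' hi'
    have := h4 t (by omega)
    rw [hwin' t ht, pf_tab _ (by omega)] at this
    rw [this] at htt
    exact absurd htt (by simp)

/-! ### List plumbing -/

lemma getD_factor {g : ℕ → Bool} {n t : ℕ} (ht : t < n) :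
    ((List.range n).map g).getD t false = g t := by
  rw [List.getD_eq_getElem?_getD, List.getElem?_map, List.getElem?_range ht]; rfl

lemma all_false {a : List Bool} (ha : true ∉ a) {t : ℕ} (ht : t < a.length) :
    a.getD t false = false := by
  rw [List.getD_eq_getElem _ _ ht]
  cases h : a[t] with
  | false => rfl
  | true => exact absurd (h ▸ List.getElem_mem ht) ha

lemma extract (w v : List Bool) (iw iv : ℕ)
    (hw : w = (List.range w.length).map (fun t => pf (iw + t)))
    (hv : v = (List.range v.length).map (fun t => pf (iv + t)))
    (hlen : w.length = v.length) (h8 : 8 ≤ w.length)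
    (a b a' b' : List Bool) (ha : true ∉ a) (ha' : true ∉ a')
    (hwd : w = a ++ true :: b) (hvd : v = a' ++ true :: b')
    (heq : a ++ b = a' ++ b') (hlt : a.length < a'.length) : False := by
  have hwget : ∀ t, t < w.length → w.getD t false = pf (iw + t) := by
    intro t ht
    conv_lhs => rw [hw]
    exact getD_factor ht
  have hvget : ∀ t, t < v.length → v.getD t false = pf (iv + t) := by
    intro t ht
    conv_lhs => rw [hv]
    exact getD_factor ht
  set c := a'.drop a.length with hcdef
  have hpref : a = a'.take a.length := by
    have h := congrArg (List.take a.length) heq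
    rwa [List.take_left, List.take_append_of_le_length (le_of_lt hlt)] at h
  have hc : a' = a ++ c := by
    conv_lhs => rw [← List.take_append_drop a.length a']
    rw [← hpref]
  have hbc : b = c ++ b' := by
    apply List.append_cancel_left (as := a)
    rw [heq, hc, List.append_assoc]
  set j := a.length with hjdef
  set d := c.length with hddef
  have hd1 : 1 ≤ d := by
    have : a'.length = j + d := by rw [hc]; simp; rfl
    omega
  have hcf : true ∉ c := fun hx => ha' (hc ▸ List.mem_append_right a hx)
  have hal : a'.length = j + d := by rw [hc]; simp; rfl
  have hwlen : w.length = j + 1 + (d + b'.length) := by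
    rw [hwd, hbc]; simp; omega
  have hvlen : v.length = j + d + 1 + b'.length := by
    rw [hvd]; simp [hal]; omega
  apply noConfig iw iv j d hd1
  · intro t ht
    rw [← hwget t (by omega), hwd, List.getD_append _ _ _ t (by omega)]
    exact all_false ha ht
  · rw [← hwget j (by omega), hwd, List.getD_append_right _ _ _ _ (le_refl j),
      Nat.sub_self]
    rfl
  · intro t ht
    rw [← hwget (j+1+t) (by omega), hwd, hbc,
      List.getD_append_right _ _ _ _ (by omega : a.length ≤ j+1+t),
      show j+1+t - a.length = t+1 from by omega, List.getD_cons_succ,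
      List.getD_append _ _ _ t (by omega)]
    exact all_false hcf ht
  · intro t ht
    rw [← hvget t (by omega), hvd, List.getD_append _ _ _ t (by omega)]
    exact all_false ha' (by omega)
  · rw [← hvget (j+d) (by omega), hvd,
      List.getD_append_right _ _ _ _ (by omega : a'.length ≤ j+d),
      show j+d - a'.length = 0 from by omega]
    rfl
  · intro t ht
    have hbt : t < b'.length := by omega
    have hL : w.length = v.length := hlen
    rw [← hwget (j+d+1+t) (by omega), ← hvget (j+d+1+t) (by omega), hwd, hvd, hbc]
    rw [List.getD_append_right _ _ _ _ (by omega : a.length ≤ j+d+1+t),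
      show j+d+1+t - a.length = d+1+t from by omega,
      show d+1+t = (d+t)+1 from by omega, List.getD_cons_succ,
      List.getD_append_right _ _ _ _ (by omega : c.length ≤ d+t),
      show d+t - c.length = t from by omega]
    rw [List.getD_append_right _ _ _ _ (by omega : a'.length ≤ j+d+1+t),
      show j+d+1+t - a'.length = t+1 from by omega, List.getD_cons_succ]

/-- if `w` and `v` are factors of the paperfolding word of the same
length `≥ 8` and `tortoise w = tortoise v`, then `v = w`. -/
theorem stmt_3 (w v : List Bool)
    (hw : IsFactor pf w) (hv : IsFactor pf v)
    (hlen : w.length = v.length) (h8 : 8 ≤ w.length)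
    (hteq : tortoise w = tortoise v) :
    v = w := by
  obtain ⟨iw, hw'⟩ := hw
  obtain ⟨iv, hv'⟩ := hv
  have hwget : ∀ t, t < w.length → w.getD t false = pf (iw + t) := by
    intro t ht
    conv_lhs => rw [hw']
    exact getD_factor ht
  have hvget : ∀ t, t < v.length → v.getD t false = pf (iv + t) := by
    intro t ht
    conv_lhs => rw [hv']
    exact getD_factor ht
  have htw : true ∈ w := by
    obtain ⟨i, hi, hwin⟩ := pf_window iw
    obtain ⟨t, ht, htt⟩ := fin0 i hi
    have hp : pf (iw + t) = true := by
      rw [hwin t ht, pf_tab _ (by omega)]; exact htt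
    have h1 : w.getD t false = true := by rw [hwget t (by omega)]; exact hp
    rw [List.getD_eq_getElem w false (by omega : t < w.length)] at h1
    exact h1 ▸ List.getElem_mem _
  have htv : true ∈ v := by
    obtain ⟨i, hi, hwin⟩ := pf_window iv
    obtain ⟨t, ht, htt⟩ := fin0 i hi
    have hp : pf (iv + t) = true := by
      rw [hwin t ht, pf_tab _ (by omega)]; exact htt
    have h1 : v.getD t false = true := by rw [hvget t (by omega)]; exact hp
    rw [List.getD_eq_getElem v false (by omega : t < v.length)] at h1
    exact h1 ▸ List.getElem_mem _
  unfold tortoise at hteq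
  rw [if_pos htw, if_pos htv] at hteq
  have herase : w.erase true = v.erase true := List.append_cancel_right hteq
  obtain ⟨a, b, ha, hwd, hwe⟩ := List.exists_erase_eq htw
  obtain ⟨a', b', ha', hvd, hve⟩ := List.exists_erase_eq htv
  rw [hwe, hve] at herase
  rcases lt_trichotomy a.length a'.length with hlt | heql | hgt
  · exact absurd (extract w v iw iv hw' hv' hlen h8 a b a' b' ha ha' hwd hvd herase hlt)
      not_false
  · obtain ⟨h1, h2⟩ := List.append_inj herase heql
    rw [hwd, hvd, h1, h2]
  · exact absurd (extract v w iv iw hv' hw' hlen.symm (hlen ▸ h8) a' b' a b ha' ha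
      hvd hwd herase.symm hgt) not_false
end

section
/- For all integers n ≥ 8, the tortoise complexity of the regular paperfolding word equals its factor complexity: ρ^t_f(n) = ρ_f(n). -/
-- ===================== Auxiliary development =====================

/-- Fuel-based computable version of the paperfolding rule. -/
def pfGo : ℕ → ℕ → Bool
  | 0, _ => false
  | f+1, n => if n % 2 = 1 then decide (n % 4 = 3) else pfGo f (n / 2)

def pfB (m : ℕ) : Bool := pfGo (m+1) (m+1)

lemma pfGo_fuel : ∀ f1 f2 n, 0 < n → n ≤ f1 → n ≤ f2 → pfGo f1 n = pfGo f2 n := by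
  intro f1
  induction f1 with
  | zero => intro f2 n h1 h2 _; omega
  | succ f ih =>
    intro f2 n h1 h2 h3
    obtain ⟨f2', rfl⟩ : ∃ f2', f2 = f2' + 1 := ⟨f2 - 1, by omega⟩
    simp only [pfGo]
    split
    · rfl
    · rename_i hne
      exact ih f2' (n/2) (by omega) (by omega) (by omega)

lemma pfB_even (k : ℕ) : pfB (2*k) = decide (k % 2 = 1) := by
  simp only [pfB, pfGo]
  rw [if_pos (by omega)]
  exact decide_eq_decide.mpr (by omega)

lemma pfB_odd (k : ℕ) : pfB (2*k+1) = pfB k := by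
  simp only [pfB, pfGo]
  rw [if_neg (by omega)]
  have h2 : (2*k+1+1)/2 = k+1 := by omega
  rw [h2]
  exact pfGo_fuel (2*k+1) (k+1) (k+1) (by omega) (by omega) (by omega)

lemma pf_eq_pfB (m : ℕ) : pf m = pfB m := by
  induction m using Nat.strong_induction_on with
  | _ m ih =>
    rcases Nat.even_or_odd m with ⟨k, rfl⟩ | ⟨k, rfl⟩
    · have hodd : ¬ (2 : ℕ) ∣ (k+k+1) := by omega
      have hv : padicValNat 2 (k+k+1) = 0 := padicValNat.eq_zero_of_not_dvd hodd
      have h1 : pf (k+k) = decide ((k+k+1) % 4 = 3) := by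
        simp [pf, hv]
      rw [h1, show k+k = 2*k by ring, pfB_even]
      exact decide_eq_decide.mpr (by omega)
    · have h1 : (2*k+1) + 1 = 2*(k+1) := by ring
      have hv : padicValNat 2 (2*(k+1)) = padicValNat 2 (k+1) + 1 := by
        rw [padicValNat.mul (by norm_num) (by omega), padicValNat.self (by norm_num)]
        ring
      have h2 : pf (2*k+1) = pf k := by
        simp only [pf, h1, hv]
        congr 1
        rw [pow_succ, mul_comm (2 ^ padicValNat 2 (k+1)) 2,
          Nat.mul_div_mul_left _ _ (by norm_num : (0:ℕ) < 2)]
      rw [h2, pfB_odd]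
      exact ih k (by omega)

lemma pfB16_0 (a : ℕ) : pfB (16*a+0) = false := by
  rw [show 16*a+0 = 2*(8*a+0) by ring, pfB_even]
  simp only [decide_eq_true_eq, decide_eq_false_iff_not]
  omega

lemma pfB16_1 (a : ℕ) : pfB (16*a+1) = false := by
  rw [show 16*a+1 = 2*(8*a+0)+1 by ring, pfB_odd]
  rw [show 8*a+0 = 2*(4*a+0) by ring, pfB_even]
  simp only [decide_eq_true_eq, decide_eq_false_iff_not]
  omega

lemma pfB16_2 (a : ℕ) : pfB (16*a+2) = true := by
  rw [show 16*a+2 = 2*(8*a+1) by ring, pfB_even]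
  simp only [decide_eq_true_eq, decide_eq_false_iff_not]
  omega

lemma pfB16_3 (a : ℕ) : pfB (16*a+3) = false := by
  rw [show 16*a+3 = 2*(8*a+1)+1 by ring, pfB_odd]
  rw [show 8*a+1 = 2*(4*a+0)+1 by ring, pfB_odd]
  rw [show 4*a+0 = 2*(2*a+0) by ring, pfB_even]
  simp only [decide_eq_true_eq, decide_eq_false_iff_not]
  omega

lemma pfB16_4 (a : ℕ) : pfB (16*a+4) = false := by
  rw [show 16*a+4 = 2*(8*a+2) by ring, pfB_even]
  simp only [decide_eq_true_eq, decide_eq_false_iff_not]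
  omega

lemma pfB16_5 (a : ℕ) : pfB (16*a+5) = true := by
  rw [show 16*a+5 = 2*(8*a+2)+1 by ring, pfB_odd]
  rw [show 8*a+2 = 2*(4*a+1) by ring, pfB_even]
  simp only [decide_eq_true_eq, decide_eq_false_iff_not]
  omega

lemma pfB16_6 (a : ℕ) : pfB (16*a+6) = true := by
  rw [show 16*a+6 = 2*(8*a+3) by ring, pfB_even]
  simp only [decide_eq_true_eq, decide_eq_false_iff_not]
  omega

lemma pfB16_7 (a : ℕ) : pfB (16*a+7) = pfB (2*a) := by
  rw [show 16*a+7 = 2*(8*a+3)+1 by ring, pfB_odd]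
  rw [show 8*a+3 = 2*(4*a+1)+1 by ring, pfB_odd]
  rw [show 4*a+1 = 2*(2*a+0)+1 by ring, pfB_odd]
  norm_num

lemma pfB16_8 (a : ℕ) : pfB (16*a+8) = false := by
  rw [show 16*a+8 = 2*(8*a+4) by ring, pfB_even]
  simp only [decide_eq_true_eq, decide_eq_false_iff_not]
  omega

lemma pfB16_9 (a : ℕ) : pfB (16*a+9) = false := by
  rw [show 16*a+9 = 2*(8*a+4)+1 by ring, pfB_odd]
  rw [show 8*a+4 = 2*(4*a+2) by ring, pfB_even]
  simp only [decide_eq_true_eq, decide_eq_false_iff_not]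
  omega

lemma pfB16_10 (a : ℕ) : pfB (16*a+10) = true := by
  rw [show 16*a+10 = 2*(8*a+5) by ring, pfB_even]
  simp only [decide_eq_true_eq, decide_eq_false_iff_not]
  omega

lemma pfB16_11 (a : ℕ) : pfB (16*a+11) = true := by
  rw [show 16*a+11 = 2*(8*a+5)+1 by ring, pfB_odd]
  rw [show 8*a+5 = 2*(4*a+2)+1 by ring, pfB_odd]
  rw [show 4*a+2 = 2*(2*a+1) by ring, pfB_even]
  simp only [decide_eq_true_eq, decide_eq_false_iff_not]
  omega

lemma pfB16_12 (a : ℕ) : pfB (16*a+12) = false := by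
  rw [show 16*a+12 = 2*(8*a+6) by ring, pfB_even]
  simp only [decide_eq_true_eq, decide_eq_false_iff_not]
  omega

lemma pfB16_13 (a : ℕ) : pfB (16*a+13) = true := by
  rw [show 16*a+13 = 2*(8*a+6)+1 by ring, pfB_odd]
  rw [show 8*a+6 = 2*(4*a+3) by ring, pfB_even]
  simp only [decide_eq_true_eq, decide_eq_false_iff_not]
  omega

lemma pfB16_14 (a : ℕ) : pfB (16*a+14) = true := by
  rw [show 16*a+14 = 2*(8*a+7) by ring, pfB_even]
  simp only [decide_eq_true_eq, decide_eq_false_iff_not]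
  omega

lemma pfB16_15 (a : ℕ) : pfB (16*a+15) = pfB (2*a+1) := by
  rw [show 16*a+15 = 2*(8*a+7)+1 by ring, pfB_odd]
  rw [show 8*a+7 = 2*(4*a+3)+1 by ring, pfB_odd]
  rw [show 4*a+3 = 2*(2*a+1)+1 by ring, pfB_odd]

lemma pfB16_16 (a : ℕ) : pfB (16*a+16) = false := by
  rw [show 16*a+16 = 2*(8*a+8) by ring, pfB_even]
  simp only [decide_eq_true_eq, decide_eq_false_iff_not]
  omega

lemma pfB16_17 (a : ℕ) : pfB (16*a+17) = false := by
  rw [show 16*a+17 = 2*(8*a+8)+1 by ring, pfB_odd]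
  rw [show 8*a+8 = 2*(4*a+4) by ring, pfB_even]
  simp only [decide_eq_true_eq, decide_eq_false_iff_not]
  omega

lemma pfB16_18 (a : ℕ) : pfB (16*a+18) = true := by
  rw [show 16*a+18 = 2*(8*a+9) by ring, pfB_even]
  simp only [decide_eq_true_eq, decide_eq_false_iff_not]
  omega

lemma pfB16_19 (a : ℕ) : pfB (16*a+19) = false := by
  rw [show 16*a+19 = 2*(8*a+9)+1 by ring, pfB_odd]
  rw [show 8*a+9 = 2*(4*a+4)+1 by ring, pfB_odd]
  rw [show 4*a+4 = 2*(2*a+2) by ring, pfB_even]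
  simp only [decide_eq_true_eq, decide_eq_false_iff_not]
  omega

lemma pfB16_20 (a : ℕ) : pfB (16*a+20) = false := by
  rw [show 16*a+20 = 2*(8*a+10) by ring, pfB_even]
  simp only [decide_eq_true_eq, decide_eq_false_iff_not]
  omega

lemma pfB16_21 (a : ℕ) : pfB (16*a+21) = true := by
  rw [show 16*a+21 = 2*(8*a+10)+1 by ring, pfB_odd]
  rw [show 8*a+10 = 2*(4*a+5) by ring, pfB_even]
  simp only [decide_eq_true_eq, decide_eq_false_iff_not]
  omega

lemma pfB16_22 (a : ℕ) : pfB (16*a+22) = true := by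
  rw [show 16*a+22 = 2*(8*a+11) by ring, pfB_even]
  simp only [decide_eq_true_eq, decide_eq_false_iff_not]
  omega

lemma winC (a b u : ℕ) (hu : u < 23) (h0 : pfB (2*a) = pfB (2*b))
    (h1 : pfB (2*a+1) = pfB (2*b+1)) : pfB (16*a+u) = pfB (16*b+u) := by
  interval_cases u <;>
    simp only [pfB16_0, pfB16_1, pfB16_2, pfB16_3, pfB16_4, pfB16_5, pfB16_6, pfB16_7,
      pfB16_8, pfB16_9, pfB16_10, pfB16_11, pfB16_12, pfB16_13, pfB16_14, pfB16_15,
      pfB16_16, pfB16_17, pfB16_18, pfB16_19, pfB16_20, pfB16_21, pfB16_22, h0, h1]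

lemma window96 (m : ℕ) : ∃ i < 96, ∀ t < 8, pfB (m + t) = pfB (i + t) := by
  obtain ⟨B, hB6, e0, e1⟩ : ∃ B, B < 6 ∧ pfB (2*(m/16)) = pfB (2*B) ∧
      pfB (2*(m/16)+1) = pfB (2*B+1) := by
    cases hx : pfB (2*(m/16)) <;> cases hy : pfB (2*(m/16)+1)
    · exact ⟨0, by norm_num, by decide, by decide⟩
    · exact ⟨2, by norm_num, by decide, by decide⟩
    · exact ⟨1, by norm_num, by decide, by decide⟩
    · exact ⟨5, by norm_num, by decide, by decide⟩
  refine ⟨16*B + m % 16, by omega, ?_⟩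
  intro t ht
  rw [show m + t = 16*(m/16) + (m % 16 + t) by omega,
      show 16*B + m % 16 + t = 16*B + (m % 16 + t) by ring]
  exact winC _ B _ (by omega) e0 e1

/-- Bitmask of the first 104 values of the paperfolding word. -/
def pfN : ℕ := 7996130860699244544684768652388

def pfT (m : ℕ) : Bool := pfN.testBit m

set_option maxRecDepth 10000 in
lemma pfB_eq_pfT : ∀ m < 104, pfB m = pfT m := by decide

def wByte (i : ℕ) : ℕ := (pfN >>> i) % 2^8

def WL : List ℕ := [25, 27, 35, 39, 50, 54, 57, 59, 70, 78, 99, 100, 103, 108,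
  114, 118, 140, 141, 145, 147, 156, 157, 177, 179, 198, 200, 201, 206, 216, 217, 228, 236]

set_option maxRecDepth 10000 in
lemma wByte_mem : ∀ i < 96, wByte i ∈ WL := by decide

def okPair (b1 b2 : ℕ) : Bool :=
  (List.range 4).all fun j => (List.range j).all fun i =>
    !(b1.testBit i && (List.range (j+1)).all (fun x => x == i || !b1.testBit x) &&
      (List.range j).all (fun x => !b2.testBit x) && b2.testBit j &&
      (List.range 8).all fun x => decide (x ≤ j) || (b1.testBit x == b2.testBit x))

set_option maxRecDepth 10000 in
lemma okAll : ∀ b1 ∈ WL, ∀ b2 ∈ WL, okPair b1 b2 = true := by decide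

lemma wByte_testBit (i x : ℕ) (hx : x < 8) : (wByte i).testBit x = pfT (i + x) := by
  rw [wByte, Nat.testBit_mod_two_pow, Nat.testBit_shiftRight, pfT]
  simp [hx, Nat.add_comm]

lemma pf_true_window (m : ℕ) : ∃ t < 4, pf (m+t) = true := by
  obtain ⟨t, ht, hmod⟩ : ∃ t < 4, (m+t) % 4 = 2 := ⟨(6 - m % 4) % 4, by omega, by omega⟩
  refine ⟨t, ht, ?_⟩
  rw [pf_eq_pfB, show m+t = 2*((m+t)/2) by omega, pfB_even]
  simp only [decide_eq_true_eq]
  omega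

lemma core (p0 q0 i j n : ℕ) (hn : 8 ≤ n) (hij : i < j) (hjn : j < n)
    (hA1 : pf (p0+i) = true)
    (hA0 : ∀ x, x ≤ j → x ≠ i → pf (p0+x) = false)
    (hB0 : ∀ x, x < j → pf (q0+x) = false)
    (hB1 : pf (q0+j) = true)
    (hT : ∀ x, j < x → x < n → pf (p0+x) = pf (q0+x)) : False := by
  have hj3 : j ≤ 3 := by
    by_contra hcon
    obtain ⟨t, ht, htt⟩ := pf_true_window q0
    have hf := hB0 t (by omega)
    rw [htt] at hf
    exact absurd hf (by decide)
  obtain ⟨i1, hi1, hw1⟩ := window96 p0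
  obtain ⟨i2, hi2, hw2⟩ := window96 q0
  have E1 : ∀ x, x < 8 → (wByte i1).testBit x = pf (p0 + x) := by
    intro x hx
    rw [wByte_testBit i1 x hx, ← pfB_eq_pfT _ (by omega), ← hw1 x hx, ← pf_eq_pfB]
  have E2 : ∀ x, x < 8 → (wByte i2).testBit x = pf (q0 + x) := by
    intro x hx
    rw [wByte_testBit i2 x hx, ← pfB_eq_pfT _ (by omega), ← hw2 x hx, ← pf_eq_pfB]
  have h := okAll (wByte i1) (wByte_mem i1 hi1) (wByte i2) (wByte_mem i2 hi2)
  rw [okPair] at h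
  simp only [List.all_eq_true, List.mem_range] at h
  have hx := h j (by omega) i hij
  have c1 : (wByte i1).testBit i = true := by rw [E1 i (by omega)]; exact hA1
  have c2 : (List.range (j+1)).all (fun x => x == i || !(wByte i1).testBit x) = true := by
    simp only [List.all_eq_true, List.mem_range]
    intro x hxlt
    rcases eq_or_ne x i with rfl | hne
    · simp
    · have hh : (wByte i1).testBit x = false := by
        rw [E1 x (by omega)]; exact hA0 x (by omega) hne
      simp [hh]
  have c3 : (List.range j).all (fun x => !(wByte i2).testBit x) = true := by
    simp only [List.all_eq_true, List.mem_range]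
    intro x hxlt
    have hh : (wByte i2).testBit x = false := by
      rw [E2 x (by omega)]; exact hB0 x hxlt
    simp [hh]
  have c4 : (wByte i2).testBit j = true := by rw [E2 j (by omega)]; exact hB1
  have c5 : (List.range 8).all
      (fun x => decide (x ≤ j) || ((wByte i1).testBit x == (wByte i2).testBit x)) = true := by
    simp only [List.all_eq_true, List.mem_range]
    intro x hxlt
    rcases le_or_gt x j with hle | hgt
    · simp [hle]
    · have hh : (wByte i1).testBit x = (wByte i2).testBit x := by
        rw [E1 x (by omega), E2 x (by omega)]; exact hT x hgt (by omega)
      simp [hh]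
  rw [c1, c2, c3, c4, c5] at hx
  simp at hx

lemma getD_false : ∀ (l : List Bool), true ∉ l → ∀ n : ℕ, l.getD n false = false := by
  intro l
  induction l with
  | nil => intro _ n; cases n <;> rfl
  | cons a l ih =>
    intro h n
    cases n with
    | zero =>
      cases a with
      | false => rfl
      | true => exact absurd List.mem_cons_self h
    | succ m => exact ih (fun hm => h (List.mem_cons_of_mem _ hm)) m

lemma asym (n : ℕ) (hn : 8 ≤ n) (w v : List Bool)
    (hw : w ∈ factorSet pf n) (hv : v ∈ factorSet pf n)
    (p q p' q' : List Bool)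
    (hwd : w = p ++ true :: q) (hvd : v = p' ++ true :: q')
    (hp : true ∉ p) (hp' : true ∉ p')
    (hpq : p ++ q = p' ++ q')
    (hlt : p.length < p'.length) : False := by
  obtain ⟨hwl, p0, hwf⟩ := hw
  obtain ⟨hvl, q0, hvf⟩ := hv
  have hpref : p <+: p' := by
    apply List.prefix_of_prefix_length_le (List.prefix_append p q)
      (hpq ▸ List.prefix_append p' q') (le_of_lt hlt)
  obtain ⟨d, hd⟩ := hpref
  have hq : q = d ++ q' := by
    apply List.append_cancel_left (as := p)
    rw [hpq, ← hd, List.append_assoc]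
  set i := p.length with hi
  set j := p'.length with hj
  have hdlen : d.length = j - i := by
    rw [hj, ← hd]; simp [hi]
  have htd : true ∉ d := by
    intro hmem; exact hp' (hd ▸ List.mem_append_right p hmem)
  have hwlen : n = i + 1 + q.length := by
    rw [← hwl, hwd]; simp; try omega
  have hvlen : n = j + 1 + q'.length := by
    rw [← hvl, hvd]; simp; try omega
  have hjn : j < n := by omega
  have hwx : ∀ x : ℕ, x < n → pf (p0 + x) = w.getD x false := by
    intro x hx
    rw [List.getD_eq_getElem _ _ (by omega), List.getElem_of_eq hwf (by omega)]
    simp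
  have hvx : ∀ x : ℕ, x < n → pf (q0 + x) = v.getD x false := by
    intro x hx
    rw [List.getD_eq_getElem _ _ (by omega), List.getElem_of_eq hvf (by omega)]
    simp
  apply core p0 q0 i j n hn (by omega) hjn
  · rw [hwx i (by omega), hwd, List.getD_append_right _ _ _ _ (le_of_eq hi.symm),
      show i - p.length = 0 by omega, List.getD_cons_zero]
  · intro x hxj hxi
    rw [hwx x (by omega), hwd, hq]
    rcases Nat.lt_or_ge x i with hxi' | hxi'
    · rw [List.getD_append _ _ _ _ (by omega : x < p.length)]
      exact getD_false p hp x
    · rw [List.getD_append_right _ _ _ _ (by omega : p.length ≤ x),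
        show x - p.length = (x - i - 1) + 1 by omega, List.getD_cons_succ,
        List.getD_append _ _ _ _ (by omega : x - i - 1 < d.length)]
      exact getD_false d htd _
  · intro x hxj
    rw [hvx x (by omega), hvd, List.getD_append _ _ _ _ (by omega : x < p'.length)]
    exact getD_false p' hp' x
  · rw [hvx j (by omega), hvd, List.getD_append_right _ _ _ _ (le_of_eq hj.symm),
      show j - p'.length = 0 by omega, List.getD_cons_zero]
  · intro x hjx hxn
    rw [hwx x (by omega), hvx x (by omega), hwd, hvd, hq,
      List.getD_append_right _ _ _ _ (by omega : p.length ≤ x),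
      List.getD_append_right _ _ _ _ (by omega : p'.length ≤ x),
      show x - p.length = (x - i - 1) + 1 by omega,
      show x - p'.length = (x - j - 1) + 1 by omega,
      List.getD_cons_succ, List.getD_cons_succ,
      List.getD_append_right _ _ _ _ (by omega : d.length ≤ x - i - 1),
      show x - i - 1 - d.length = x - j - 1 by omega]

lemma tortoise_injOn (n : ℕ) (hn : 8 ≤ n) : Set.InjOn tortoise (factorSet pf n) := by
  intro w hw v hv ht
  by_contra hne
  unfold tortoise at ht
  by_cases h1 : true ∈ w <;> by_cases h2 : true ∈ v
  · rw [if_pos h1, if_pos h2] at ht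
    have herase : w.erase true = v.erase true := List.append_cancel_right ht
    obtain ⟨p, q, hp, hwd, hwe⟩ := List.exists_erase_eq h1
    obtain ⟨p', q', hp', hvd, hve⟩ := List.exists_erase_eq h2
    have hpq : p ++ q = p' ++ q' := by rw [← hwe, ← hve, herase]
    rcases Nat.lt_trichotomy p.length p'.length with hlt | heq | hgt
    · exact asym n hn w v hw hv p q p' q' hwd hvd hp hp' hpq hlt
    · apply hne
      rw [hwd, hvd, (List.append_inj hpq heq).1, (List.append_inj hpq heq).2]
    · exact asym n hn v w hv hw p' q' p q hvd hwd hp' hp hpq.symm hgt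
  · rw [if_pos h1, if_neg h2] at ht
    exact h2 (ht ▸ List.mem_append_right _ (by simp))
  · rw [if_neg h1, if_pos h2] at ht
    exact h1 (ht ▸ List.mem_append_right _ (by simp))
  · rw [if_neg h1, if_neg h2] at ht
    exact hne ht


/-- for all `n ≥ 8`, the tortoise complexity of the paperfolding word
equals its factor complexity. -/

theorem stmt_4 (n : ℕ) (hn : 8 ≤ n) : rhoTort pf n = rho pf n := by
  unfold rhoTort rho
  exact Set.ncard_image_of_injOn (tortoise_injOn n hn)
end
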